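/- Let θ̂⁺ = θ̂ − γ ∑_{i=1}^n (π_i/(n y_i)) ∇f_i(θ_i), where θ̂ = ∑_{i=1}^n π_i θ_i. If 0 < γ ≤ 1/(4L), then F(θ̂⁺) − F(θ̂) ≤ −(γ/4)‖∇F(θ̂)‖² + (3γ/(2n))∑_{i=1}^n (ε/y_i)²‖∇f_i(θ_i)‖² + (3γL²/(2n))∑_{i=1}^n ‖θ_i − θ̂‖². -/

import Mathlib

open BigOperators
set_option maxHeartbeats 1000000

section Aux

variable {E : Type*} [NormedAddCommGroup E] [InnerProductSpace ℝ E] [CompleteSpace E]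

lemma line_hasDerivAt (f : E → ℝ) (hf : Differentiable ℝ f) (x v : E) (t : ℝ) :
    HasDerivAt (fun s : ℝ => f (x + s • v)) (inner ℝ (gradient f (x + t • v)) v : ℝ) t := by
  have hc : HasDerivAt (fun s : ℝ => x + s • v) v t := by
    simpa using ((hasDerivAt_id t).smul_const v).const_add x
  have h1 : HasFDerivAt f (InnerProductSpace.toDual ℝ E (gradient f (x + t • v))) (x + t • v) :=
    (hf (x + t • v)).hasGradientAt.hasFDerivAt
  have := h1.comp_hasDerivAt t hc
  simp at this ⊢
  exact this

lemma descent_lemma (f : E → ℝ) (hf : Differentiable ℝ f) (L : ℝ)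
    (hLip : ∀ x z, ‖gradient f x - gradient f z‖ ≤ L * ‖x - z‖) (x y : E) :
    f y - f x ≤ (inner ℝ (gradient f x) (y - x) : ℝ) + L / 2 * ‖y - x‖ ^ 2 := by
  set v := y - x with hv
  set a : ℝ := inner ℝ (gradient f x) v with ha
  set ψ : ℝ → ℝ := fun t => f (x + t • v) - t * a - L / 2 * t ^ 2 * ‖v‖ ^ 2 with hψ
  have hderiv : ∀ t : ℝ, HasDerivAt ψ
      ((inner ℝ (gradient f (x + t • v)) v : ℝ) - a - L * t * ‖v‖ ^ 2) t := by
    intro t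
    have h1 := line_hasDerivAt f hf x v t
    have h2 : HasDerivAt (fun s : ℝ => s * a) a t := by
      simpa using (hasDerivAt_id t).mul_const a
    have h3 : HasDerivAt (fun s : ℝ => L / 2 * s ^ 2 * ‖v‖ ^ 2) (L * t * ‖v‖ ^ 2) t := by
      have := ((hasDerivAt_pow 2 t).const_mul (L / 2)).mul_const (‖v‖ ^ 2)
      refine this.congr_deriv ?_
      ring
    have h4 := (h1.sub h2).sub h3
    simp at h4 ⊢
    exact h4
  have hmono : AntitoneOn ψ (Set.Icc (0:ℝ) 1) := by
    apply antitoneOn_of_deriv_nonpos (convex_Icc 0 1)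
    · exact (Differentiable.continuous (fun t => (hderiv t).differentiableAt)).continuousOn
    · intro t _
      exact ((hderiv t).differentiableAt).differentiableWithinAt
    · intro t ht
      rw [interior_Icc] at ht
      rw [(hderiv t).deriv]
      have hb : (inner ℝ (gradient f (x + t • v)) v : ℝ) - a ≤ L * t * ‖v‖ ^ 2 := by
        have he : (inner ℝ (gradient f (x + t • v)) v : ℝ) - a
            = inner ℝ (gradient f (x + t • v) - gradient f x) v := by
          rw [inner_sub_left]
        rw [he]
        calc (inner ℝ (gradient f (x + t • v) - gradient f x) v : ℝ)
            ≤ ‖gradient f (x + t • v) - gradient f x‖ * ‖v‖ := real_inner_le_norm _ _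
          _ ≤ (L * ‖(x + t • v) - x‖) * ‖v‖ :=
              mul_le_mul_of_nonneg_right (hLip _ _) (norm_nonneg _)
          _ = L * t * ‖v‖ ^ 2 := by
              have : ‖(x + t • v) - x‖ = t * ‖v‖ := by
                simp [norm_smul, abs_of_pos ht.1]
              rw [this]; ring
      linarith
  have h01 := hmono (Set.mem_Icc.2 ⟨le_refl 0, zero_le_one⟩)
    (Set.mem_Icc.2 ⟨zero_le_one, le_refl 1⟩) zero_le_one
  have e0 : ψ 0 = f x := by simp [hψ]
  have e1 : ψ 1 = f y - a - L / 2 * ‖v‖ ^ 2 := by simp [hψ, hv]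
  rw [e0, e1] at h01
  linarith

lemma sum_hasGradientAt (n : ℕ) (f : Fin n → E → ℝ) (hdiff : ∀ i, Differentiable ℝ (f i))
    (c : ℝ) (x : E) :
    HasGradientAt (fun x => c * ∑ i, f i x) (c • ∑ i, gradient (f i) x) x := by
  have h : HasFDerivAt (fun x => ∑ i, f i x)
      (∑ i, InnerProductSpace.toDual ℝ E (gradient (f i) x)) x :=
    HasFDerivAt.fun_sum (fun i _ => (hdiff i x).hasGradientAt.hasFDerivAt)
  have h2 := h.const_mul c
  rw [hasGradientAt_iff_hasFDerivAt]
  refine h2.congr_fderiv ?_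
  simp [map_sum, map_smul]

end Aux


/-- Simplified descent inequality under the stepsize restriction
`0 < γ ≤ 1/(4L)`:
`F(θ̂⁺) − F(θ̂) ≤ −(γ/4)‖∇F(θ̂)‖² + (3γ/(2n))∑ (ε/y_i)²‖∇f_i(θ_i)‖²
  + (3γL²/(2n))∑ ‖θ_i − θ̂‖²`. -/
theorem stmt_7 (n d : ℕ) (hn : 1 ≤ n) (hd : 1 ≤ d) (L : ℝ) (hL : 0 < L)
    (f : Fin n → EuclideanSpace ℝ (Fin d) → ℝ)
    (hdiff : ∀ i, Differentiable ℝ (f i))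
    (hLip : ∀ i x z, ‖gradient (f i) x - gradient (f i) z‖ ≤ L * ‖x - z‖)
    (θ : Fin n → EuclideanSpace ℝ (Fin d))
    (π : Fin n → ℝ) (hπ_pos : ∀ i, 0 < π i) (hπ_sum : ∑ i, π i = 1)
    (y : Fin n → ℝ) (hy : ∀ i, 0 < y i)
    (ε : ℝ) (hε : 0 ≤ ε) (hyπ : ∀ i, |y i - π i| ≤ ε)
    (γ : ℝ) (hγ : 0 < γ) (hγL : γ ≤ 1 / (4 * L)) :
    let F : EuclideanSpace ℝ (Fin d) → ℝ := fun x => (1 / (n : ℝ)) * ∑ i, f i x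
    let θhat : EuclideanSpace ℝ (Fin d) := ∑ i, π i • θ i
    let θplus : EuclideanSpace ℝ (Fin d) :=
      θhat - γ • ∑ i, (π i / ((n : ℝ) * y i)) • gradient (f i) (θ i)
    F θplus - F θhat ≤ -(γ / 4) * ‖gradient F θhat‖ ^ 2
      + (3 * γ / (2 * (n : ℝ))) * ∑ i, (ε / y i) ^ 2 * ‖gradient (f i) (θ i)‖ ^ 2
      + (3 * γ * L ^ 2 / (2 * (n : ℝ))) * ∑ i, ‖θ i - θhat‖ ^ 2 := by
  intro F θhat θplus
  have hn0 : (0:ℝ) < n := by exact_mod_cast hn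
  -- gradient of F
  have hgradF : ∀ x, gradient F x = (1/(n:ℝ)) • ∑ i, gradient (f i) x := fun x =>
    (sum_hasGradientAt n f hdiff (1/(n:ℝ)) x).gradient
  have hFdiff : Differentiable ℝ F := fun x =>
    (sum_hasGradientAt n f hdiff (1/(n:ℝ)) x).differentiableAt
  -- Lipschitz gradient of F
  have hLipF : ∀ x z, ‖gradient F x - gradient F z‖ ≤ L * ‖x - z‖ := by
    intro x z
    rw [hgradF x, hgradF z, ← smul_sub, ← Finset.sum_sub_distrib]
    rw [norm_smul]
    have h1 : ‖∑ i, (gradient (f i) x - gradient (f i) z)‖ ≤ (n:ℝ) * (L * ‖x - z‖) := by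
      calc ‖∑ i, (gradient (f i) x - gradient (f i) z)‖
          ≤ ∑ i, ‖gradient (f i) x - gradient (f i) z‖ := norm_sum_le _ _
        _ ≤ ∑ _i : Fin n, L * ‖x - z‖ := Finset.sum_le_sum (fun i _ => hLip i x z)
        _ = (n:ℝ) * (L * ‖x - z‖) := by simp [Finset.sum_const, mul_comm]
    have h2 : ‖(1/(n:ℝ))‖ = 1/(n:ℝ) := by
      rw [Real.norm_eq_abs, abs_of_pos (by positivity)]
    rw [h2]
    calc 1/(n:ℝ) * ‖∑ i, (gradient (f i) x - gradient (f i) z)‖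
        ≤ 1/(n:ℝ) * ((n:ℝ) * (L * ‖x - z‖)) := by
          exact mul_le_mul_of_nonneg_left h1 (by positivity)
      _ = L * ‖x - z‖ := by field_simp
  -- notation
  set g : EuclideanSpace ℝ (Fin d) := ∑ i, (π i / ((n : ℝ) * y i)) • gradient (f i) (θ i)
    with hg
  set a : EuclideanSpace ℝ (Fin d) := gradient F θhat with haa
  set A : ℝ := ‖a‖ with hA
  set D : ℝ := ‖g - a‖ with hD
  -- descent lemma
  have key := descent_lemma F hFdiff L hLipF θhat θplus
  have hdiffpt : θplus - θhat = (-γ) • g := by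
    show (θhat - γ • g) - θhat = (-γ) • g
    rw [sub_sub_cancel_left, neg_smul]
  rw [hdiffpt] at key
  have hinner : (inner ℝ a ((-γ) • g) : ℝ) = -γ * inner ℝ a g := real_inner_smul_right a g (-γ)
  have hnorm2 : ‖(-γ) • g‖ ^ 2 = γ ^ 2 * ‖g‖ ^ 2 := by
    rw [norm_smul, Real.norm_eq_abs, abs_neg, abs_of_pos hγ, mul_pow]
  rw [hinner, hnorm2] at key
  -- inner product estimates
  have h1 : (inner ℝ a g : ℝ) = A ^ 2 + inner ℝ a (g - a) := by
    rw [inner_sub_right, real_inner_self_eq_norm_sq]; ring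
  have h2 : -(A * D) ≤ (inner ℝ a (g - a) : ℝ) := by
    have := abs_real_inner_le_norm a (g - a)
    rw [abs_le] at this
    exact this.1
  have h3 : ‖g‖ ≤ A + D := by
    calc ‖g‖ = ‖a + (g - a)‖ := by rw [add_sub_cancel]
      _ ≤ A + D := norm_add_le _ _
  have hgsq : ‖g‖ ^ 2 ≤ (A + D) ^ 2 := by
    apply pow_le_pow_left₀ (norm_nonneg g) h3
  -- first reduction
  have hγL' : γ * L ≤ 1/4 := by
    rw [le_div_iff₀ (by positivity)] at hγL
    nlinarith
  have step1 : F θplus - F θhat ≤ -(γ/4) * A ^ 2 + (3*γ/4) * D ^ 2 := by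
    have hAD : 0 ≤ A := norm_nonneg _
    have hDD : 0 ≤ D := norm_nonneg _
    have hb : F θplus - F θhat ≤ -γ * (A^2 - A*D) + L/2 * (γ^2 * (A+D)^2) := by
      calc F θplus - F θhat ≤ -γ * inner ℝ a g + L / 2 * (γ ^ 2 * ‖g‖ ^ 2) := key
        _ ≤ -γ * (A^2 - A*D) + L/2 * (γ^2 * (A+D)^2) := by
            have : -γ * (inner ℝ a g : ℝ) ≤ -γ * (A^2 - A*D) := by
              rw [h1]
              nlinarith [h2]
            have h4 : L/2 * (γ^2 * ‖g‖^2) ≤ L/2 * (γ^2 * (A+D)^2) := by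
              apply mul_le_mul_of_nonneg_left _ (by positivity)
              exact mul_le_mul_of_nonneg_left hgsq (by positivity)
            linarith
    nlinarith [mul_nonneg hγ.le (sq_nonneg (A - D)),
      mul_nonneg (mul_nonneg hγ.le (sub_nonneg.2 hγL')) (sq_nonneg (A + D)),
      sq_nonneg (A + D), sq_nonneg (A - D)]
  -- bound D^2
  set u : Fin n → ℝ := fun i => (ε / y i) * ‖gradient (f i) (θ i)‖ + L * ‖θ i - θhat‖ with hu
  have hwnorm : ∀ i, ‖(π i / ((n : ℝ) * y i)) • gradient (f i) (θ i)
      - (1/(n:ℝ)) • gradient (f i) θhat‖ ≤ (1/(n:ℝ)) * u i := by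
    intro i
    have hyi := hy i
    have hsplit : (π i / ((n : ℝ) * y i)) • gradient (f i) (θ i)
        - (1/(n:ℝ)) • gradient (f i) θhat
        = (1/(n:ℝ)) • ((π i / y i - 1) • gradient (f i) (θ i)
            + (gradient (f i) (θ i) - gradient (f i) θhat)) := by
      have hn' : (n:ℝ) ≠ 0 := ne_of_gt hn0
      have hy' : y i ≠ 0 := ne_of_gt hyi
      have hc : π i / ((n : ℝ) * y i) = (1/(n:ℝ)) * (π i / y i - 1) + 1/(n:ℝ) := by
        field_simp; ring
      rw [smul_add, smul_smul, smul_sub, hc, add_smul]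
      abel
    rw [hsplit, norm_smul]
    have h2 : ‖(1/(n:ℝ))‖ = 1/(n:ℝ) := by
      rw [Real.norm_eq_abs, abs_of_pos (by positivity)]
    rw [h2]
    apply mul_le_mul_of_nonneg_left _ (by positivity)
    calc ‖(π i / y i - 1) • gradient (f i) (θ i)
            + (gradient (f i) (θ i) - gradient (f i) θhat)‖
        ≤ ‖(π i / y i - 1) • gradient (f i) (θ i)‖
            + ‖gradient (f i) (θ i) - gradient (f i) θhat‖ := norm_add_le _ _
      _ ≤ (ε / y i) * ‖gradient (f i) (θ i)‖ + L * ‖θ i - θhat‖ := by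
          apply add_le_add
          · rw [norm_smul, Real.norm_eq_abs]
            apply mul_le_mul_of_nonneg_right _ (norm_nonneg _)
            have : π i / y i - 1 = (π i - y i) / y i := by field_simp
            rw [this, abs_div, abs_of_pos hyi, abs_sub_comm]
            exact div_le_div_of_nonneg_right (hyπ i) hyi.le |>.trans_eq rfl
          · exact hLip i _ _
  have hDle : D ≤ (1/(n:ℝ)) * ∑ i, u i := by
    have hga : g - a = ∑ i, ((π i / ((n : ℝ) * y i)) • gradient (f i) (θ i)
        - (1/(n:ℝ)) • gradient (f i) θhat) := by
      rw [haa, hgradF, Finset.smul_sum, hg, ← Finset.sum_sub_distrib]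
    rw [hD, hga]
    calc ‖∑ i, ((π i / ((n : ℝ) * y i)) • gradient (f i) (θ i)
            - (1/(n:ℝ)) • gradient (f i) θhat)‖
        ≤ ∑ i, ‖(π i / ((n : ℝ) * y i)) • gradient (f i) (θ i)
            - (1/(n:ℝ)) • gradient (f i) θhat‖ := norm_sum_le _ _
      _ ≤ ∑ i, (1/(n:ℝ)) * u i := Finset.sum_le_sum (fun i _ => hwnorm i)
      _ = (1/(n:ℝ)) * ∑ i, u i := by rw [Finset.mul_sum]
  have hu_nonneg : ∀ i, 0 ≤ u i := by
    intro i
    have := hy i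
    have h1 : 0 ≤ (ε / y i) * ‖gradient (f i) (θ i)‖ := by positivity
    have h2 : 0 ≤ L * ‖θ i - θhat‖ := by positivity
    rw [hu]; dsimp; linarith
  have hDsq : D ^ 2 ≤ (2/(n:ℝ)) * ∑ i, (ε / y i) ^ 2 * ‖gradient (f i) (θ i)‖ ^ 2
      + (2 * L ^ 2/(n:ℝ)) * ∑ i, ‖θ i - θhat‖ ^ 2 := by
    have hD0 : 0 ≤ D := norm_nonneg _
    have hsum0 : 0 ≤ ∑ i, u i := Finset.sum_nonneg (fun i _ => hu_nonneg i)
    have s1 : D ^ 2 ≤ (1/(n:ℝ))^2 * (∑ i, u i) ^ 2 := by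
      rw [← mul_pow]
      exact pow_le_pow_left₀ hD0 hDle 2
    have s2 : (∑ i, u i) ^ 2 ≤ (n:ℝ) * ∑ i, (u i) ^ 2 := by
      have := sq_sum_le_card_mul_sum_sq (s := (Finset.univ : Finset (Fin n))) (f := u)
      simpa using this
    have s3 : ∑ i, (u i) ^ 2 ≤ 2 * ∑ i, (ε / y i) ^ 2 * ‖gradient (f i) (θ i)‖ ^ 2
          + 2 * L ^ 2 * ∑ i, ‖θ i - θhat‖ ^ 2 := by
      rw [Finset.mul_sum, Finset.mul_sum, ← Finset.sum_add_distrib]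
      apply Finset.sum_le_sum
      intro i _
      rw [hu]; dsimp
      nlinarith [sq_nonneg ((ε / y i) * ‖gradient (f i) (θ i)‖ - L * ‖θ i - θhat‖)]
    have hsum2 : (∑ i, u i)^2 ≤ (n:ℝ) * (2 * ∑ i, (ε / y i) ^ 2 * ‖gradient (f i) (θ i)‖ ^ 2
          + 2 * L ^ 2 * ∑ i, ‖θ i - θhat‖ ^ 2) := by
      calc (∑ i, u i) ^ 2 ≤ (n:ℝ) * ∑ i, (u i)^2 := s2
        _ ≤ (n:ℝ) * (2 * ∑ i, (ε / y i) ^ 2 * ‖gradient (f i) (θ i)‖ ^ 2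
          + 2 * L ^ 2 * ∑ i, ‖θ i - θhat‖ ^ 2) :=
            mul_le_mul_of_nonneg_left s3 hn0.le
    calc D ^ 2 ≤ (1/(n:ℝ))^2 * (∑ i, u i) ^ 2 := s1
      _ ≤ (1/(n:ℝ))^2 * ((n:ℝ) * (2 * ∑ i, (ε / y i) ^ 2 * ‖gradient (f i) (θ i)‖ ^ 2
          + 2 * L ^ 2 * ∑ i, ‖θ i - θhat‖ ^ 2)) := by
            exact mul_le_mul_of_nonneg_left hsum2 (by positivity)
      _ = (2/(n:ℝ)) * ∑ i, (ε / y i) ^ 2 * ‖gradient (f i) (θ i)‖ ^ 2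
          + (2 * L ^ 2/(n:ℝ)) * ∑ i, ‖θ i - θhat‖ ^ 2 := by
            field_simp
  -- combine
  have hfinal : (3*γ/4) * D ^ 2 ≤ (3 * γ / (2 * (n : ℝ)))
        * ∑ i, (ε / y i) ^ 2 * ‖gradient (f i) (θ i)‖ ^ 2
      + (3 * γ * L ^ 2 / (2 * (n : ℝ))) * ∑ i, ‖θ i - θhat‖ ^ 2 := by
    have := mul_le_mul_of_nonneg_left hDsq (by positivity : (0:ℝ) ≤ 3*γ/4)
    calc (3*γ/4) * D ^ 2
        ≤ (3*γ/4) * ((2/(n:ℝ)) * ∑ i, (ε / y i) ^ 2 * ‖gradient (f i) (θ i)‖ ^ 2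
          + (2 * L ^ 2/(n:ℝ)) * ∑ i, ‖θ i - θhat‖ ^ 2) := this
      _ = (3 * γ / (2 * (n : ℝ))) * ∑ i, (ε / y i) ^ 2 * ‖gradient (f i) (θ i)‖ ^ 2
          + (3 * γ * L ^ 2 / (2 * (n : ℝ))) * ∑ i, ‖θ i - θhat‖ ^ 2 := by
            field_simp
            ring
  calc F θplus - F θhat ≤ -(γ/4) * A ^ 2 + (3*γ/4) * D ^ 2 := step1
    _ ≤ -(γ / 4) * ‖gradient F θhat‖ ^ 2
      + ((3 * γ / (2 * (n : ℝ))) * ∑ i, (ε / y i) ^ 2 * ‖gradient (f i) (θ i)‖ ^ 2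
      + (3 * γ * L ^ 2 / (2 * (n : ℝ))) * ∑ i, ‖θ i - θhat‖ ^ 2) := by
        rw [hA, haa]
        linarith [hfinal]
    _ = _ := by ring
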